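/- Let q ≥ 0, let X, Z be finite nonempty types and Y a finite additive abelian group with |Y| ≥ 2. Fix a quantum query algorithm with q queries: a unit vector ψ₀ in H = EuclideanSpace ℂ (X × Y × Z) and unitaries C₀, …, C_q on H; for f : X → Y the final state is ψ^f := C_q · O_f · C_{q−1} · ⋯ · O_f · C₀ · ψ₀, where O_f is the oracle unitary. Let out : X × Y × Z → (X × Y)^(q+1) be any readout function assigning to each computational-basis label a list of q+1 candidate input–output pairs. Then the probability, with f drawn uniformly at random from all functions X → Y, that a computational-basis measurement of ψ^f yields an outcome w such that the q+1 pairs (xᵢ, yᵢ) = (out w)ᵢ have pairwise distinct inputs xᵢ and satisfy f xᵢ = yᵢ for all i, is at most 2^⌈log₂(q+1)⌉ / |Y|. Formally: E_{f uniform} [ Σ over basis labels w for which out w consists of q+1 distinct-input correct pairs of |⟨e_w, ψ^f⟩|² ] ≤ 2^⌈log₂(q+1)⌉ / |Y|. -/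

import Mathlib

open scoped InnerProductSpace
open Finset

set_option linter.unusedSectionVars false

noncomputable section

/-- The oracle unitary for a function `Q : X → Y`: the permutation unitary induced on
standard basis vectors by `(x, y, z) ↦ (x, y + Q x, z)`. -/
def oracleOp {X Y Z : Type*} [Fintype X] [Fintype Y] [Fintype Z] [AddCommGroup Y]
    (Q : X → Y) :
    EuclideanSpace ℂ (X × Y × Z) →L[ℂ] EuclideanSpace ℂ (X × Y × Z) :=
  LinearMap.toContinuousLinearMap
    { toFun := fun ψ => (WithLp.toLp 2 (fun p : X × Y × Z => ψ (p.1, p.2.1 - Q p.1, p.2.2)) : EuclideanSpace ℂ (X × Y × Z))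
      map_add' := fun _ _ => rfl
      map_smul' := fun _ _ => rfl }

/-- `runQ T C O ψ₀ = C T • O • C (T-1) • ⋯ • O • C 0 • ψ₀`: the final state of a quantum
query algorithm with `T` queries, computation unitaries `C 0, …, C T` and oracle unitary `O`. -/
def runQ {H : Type*} [NormedAddCommGroup H] [NormedSpace ℂ H] :
    (T : ℕ) → (Fin (T + 1) → (H →L[ℂ] H)) → (H →L[ℂ] H) → H → H
  | 0, C, _, ψ => C 0 ψ
  | T + 1, C, O, ψ => C (Fin.last (T + 1)) (O (runQ T (fun i => C i.castSucc) O ψ))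


namespace BZAux

variable {X Y : Type*} [Fintype X] [DecidableEq X] [Fintype Y] [DecidableEq Y] [Nonempty Y]

abbrev VF (X Y : Type*) := (X → Y) → ℂ

/-- Averaging the value at coordinate `t`. -/
def avg (t : X) : Module.End ℂ (VF X Y) where
  toFun G := fun f => (Fintype.card Y : ℂ)⁻¹ * ∑ y : Y, G (Function.update f t y)
  map_add' G H := by
    funext f
    simp only [Pi.add_apply, Finset.sum_add_distrib, mul_add]
  map_smul' c G := by
    funext f
    simp only [Pi.smul_apply, smul_eq_mul, RingHom.id_apply]
    rw [show ∑ y : Y, c * G (Function.update f t y)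
        = c * ∑ y : Y, G (Function.update f t y) from (Finset.mul_sum _ _ _).symm]
    ring

@[simp] lemma avg_apply (t : X) (G : VF X Y) (f : X → Y) :
    avg t G f = (Fintype.card Y : ℂ)⁻¹ * ∑ y : Y, G (Function.update f t y) := rfl

/-- Multiplication by the indicator of `f t = c`. -/
def pim (t : X) (c : Y) : Module.End ℂ (VF X Y) where
  toFun G := fun f => if f t = c then G f else 0
  map_add' G H := by
    funext f
    by_cases h : f t = c
    · simp only [Pi.add_apply, if_pos h]
    · simp only [Pi.add_apply, if_neg h, add_zero]
  map_smul' r G := by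
    funext f
    by_cases h : f t = c
    · simp only [Pi.smul_apply, if_pos h, RingHom.id_apply]
    · simp only [Pi.smul_apply, if_neg h, RingHom.id_apply, smul_zero]

@[simp] lemma pim_apply (t : X) (c : Y) (G : VF X Y) (f : X → Y) :
    pim t c G f = if f t = c then G f else 0 := rfl

/-- Multiplication by the indicator of `∀ x ∈ T, f x = b x`. -/
def prj (T : Finset X) (b : X → Y) : Module.End ℂ (VF X Y) where
  toFun G := fun f => if ∀ x ∈ T, f x = b x then G f else 0
  map_add' G H := by
    funext f
    by_cases h : ∀ x ∈ T, f x = b x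
    · simp only [Pi.add_apply, if_pos h]
    · simp only [Pi.add_apply, if_neg h, add_zero]
  map_smul' r G := by
    funext f
    by_cases h : ∀ x ∈ T, f x = b x
    · simp only [Pi.smul_apply, if_pos h, RingHom.id_apply]
    · simp only [Pi.smul_apply, if_neg h, RingHom.id_apply, smul_zero]

@[simp] lemma prj_apply (T : Finset X) (b : X → Y) (G : VF X Y) (f : X → Y) :
    prj T b G f = if ∀ x ∈ T, f x = b x then G f else 0 := rfl

lemma cardY_ne : (Fintype.card Y : ℂ) ≠ 0 := by
  exact_mod_cast Fintype.card_ne_zero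

lemma avg_commute (t s : X) : Commute (avg (X := X) (Y := Y) t) (avg s) := by
  rcases eq_or_ne t s with rfl | h
  · exact Commute.refl _
  · apply LinearMap.ext; intro G; funext f
    simp only [Module.End.mul_apply, avg_apply]
    simp only [Finset.mul_sum]
    rw [Finset.sum_comm]
    refine Finset.sum_congr rfl fun y _ => Finset.sum_congr rfl fun y' _ => ?_
    rw [Function.update_comm h]

lemma avg_idem (t : X) : avg (X := X) (Y := Y) t * avg t = avg t := by
  apply LinearMap.ext; intro G; funext f
  simp only [Module.End.mul_apply, avg_apply]
  have h1 : ∀ y : Y, ∑ y' : Y, G (Function.update (Function.update f t y) t y')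
      = ∑ y' : Y, G (Function.update f t y') := by
    intro y; refine Finset.sum_congr rfl fun y' _ => ?_
    rw [Function.update_idem]
  simp only [h1]
  rw [Finset.sum_const, Finset.card_univ, nsmul_eq_mul]
  rw [inv_mul_cancel_left₀ cardY_ne]

lemma avg_pim_commute {t s : X} (h : t ≠ s) (c : Y) :
    Commute (avg (X := X) (Y := Y) t) (pim s c) := by
  apply LinearMap.ext; intro G; funext f
  simp only [Module.End.mul_apply, avg_apply, pim_apply]
  have h1 : ∀ y : Y, Function.update f t y s = f s := fun y =>
    Function.update_of_ne (Ne.symm h) _ _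
  by_cases hs : f s = c
  · rw [if_pos hs]
    refine congrArg _ (Finset.sum_congr rfl fun y _ => ?_)
    rw [h1 y, if_pos hs]
  · rw [if_neg hs]
    have hz : ∀ y : Y, (if Function.update f t y s = c then G (Function.update f t y) else 0) = 0 := by
      intro y; rw [h1 y, if_neg hs]
    simp only [hz, Finset.sum_const_zero, mul_zero]

lemma avg_prj_commute {t : X} {T : Finset X} (h : t ∉ T) (b : X → Y) :
    Commute (avg (X := X) (Y := Y) t) (prj T b) := by
  apply LinearMap.ext; intro G; funext f
  simp only [Module.End.mul_apply, avg_apply, prj_apply]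
  have h1 : ∀ (y : Y) (x : X), x ∈ T → Function.update f t y x = f x := fun y x hx =>
    Function.update_of_ne (by rintro rfl; exact h hx) _ _
  have h2 : ∀ y : Y, (∀ x ∈ T, Function.update f t y x = b x) ↔ (∀ x ∈ T, f x = b x) := by
    intro y
    constructor
    · intro hh x hx; rw [← h1 y x hx]; exact hh x hx
    · intro hh x hx; rw [h1 y x hx]; exact hh x hx
  by_cases hc : ∀ x ∈ T, f x = b x
  · rw [if_pos hc]
    refine congrArg _ (Finset.sum_congr rfl fun y _ => ?_)
    rw [if_pos ((h2 y).mpr hc)]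
  · rw [if_neg hc]
    have hz : ∀ y : Y,
        (if ∀ x ∈ T, Function.update f t y x = b x then G (Function.update f t y) else 0) = 0 := by
      intro y; rw [if_neg (fun hh => hc ((h2 y).mp hh))]
    simp only [hz, Finset.sum_const_zero, mul_zero]

lemma pim_prj_commute (t : X) (c : Y) (T : Finset X) (b : X → Y) :
    Commute (pim (X := X) (Y := Y) t c) (prj T b) := by
  apply LinearMap.ext; intro G; funext f
  simp only [Module.End.mul_apply, pim_apply, prj_apply]
  by_cases h1 : f t = c <;> by_cases h2 : ∀ x ∈ T, f x = b x <;> simp [h1, h2]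

lemma oneSub_avg_commute (t s : X) :
    Commute (1 - avg (X := X) (Y := Y) t) (1 - avg s) :=
  ((Commute.one_left _).sub_left ((Commute.one_right _).sub_right (avg_commute t s)))

/-- `RR T = ∏_{t ∈ T} (1 - avg t)`. -/
def RR (T : Finset X) : Module.End ℂ (VF X Y) :=
  T.noncommProd (fun t => 1 - avg t) (fun _ _ _ _ _ => oneSub_avg_commute _ _)

lemma RR_empty : RR (X := X) (Y := Y) ∅ = 1 := Finset.noncommProd_empty _ _

lemma RR_insert {t : X} {T : Finset X} (ht : t ∉ T) :
    RR (X := X) (Y := Y) (insert t T) = (1 - avg t) * RR T :=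
  Finset.noncommProd_insert_of_notMem T t (fun t => 1 - avg t)
    (fun _ _ _ _ _ => oneSub_avg_commute _ _) ht

lemma commute_RR {A : Module.End ℂ (VF X Y)} {T : Finset X}
    (h : ∀ s ∈ T, Commute A (1 - avg s)) : Commute A (RR T) :=
  Finset.noncommProd_commute _ _ _ _ h

lemma oneSub_avg_idem (t : X) :
    (1 - avg (X := X) (Y := Y) t) * (1 - avg t) = 1 - avg t := by
  rw [sub_mul, one_mul, mul_sub, mul_one, avg_idem]
  abel

lemma RR_idem (T : Finset X) : RR (X := X) (Y := Y) T * RR T = RR T := by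
  classical
  induction T using Finset.induction_on with
  | empty => simp [RR_empty]
  | @insert t T ht ih =>
    rw [RR_insert ht]
    have hc : Commute (RR (X := X) (Y := Y) T) (1 - avg t) :=
      (commute_RR (fun s _ => oneSub_avg_commute t s)).symm
    calc (1 - avg t) * RR T * ((1 - avg t) * RR T)
        = (1 - avg t) * (RR T * (1 - avg t)) * RR T := by
          simp only [mul_assoc]
      _ = (1 - avg t) * ((1 - avg t) * RR T) * RR T := by rw [hc.eq]
      _ = ((1 - avg t) * (1 - avg t)) * (RR T * RR T) := by simp only [mul_assoc]
      _ = (1 - avg t) * RR T := by rw [oneSub_avg_idem, ih]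

lemma prj_empty (b : X → Y) : prj (X := X) (Y := Y) ∅ b = 1 := by
  apply LinearMap.ext; intro G; funext f
  simp

lemma prj_idem (T : Finset X) (b : X → Y) :
    prj (X := X) (Y := Y) T b * prj T b = prj T b := by
  apply LinearMap.ext; intro G; funext f
  simp only [Module.End.mul_apply, prj_apply]
  by_cases h : ∀ x ∈ T, f x = b x
  · rw [if_pos h, if_pos h]
  · rw [if_neg h, if_neg h]

lemma pim_idem (t : X) (c : Y) :
    pim (X := X) (Y := Y) t c * pim t c = pim t c := by
  apply LinearMap.ext; intro G; funext f
  simp only [Module.End.mul_apply, pim_apply]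
  by_cases h : f t = c
  · rw [if_pos h, if_pos h]
  · rw [if_neg h, if_neg h]

lemma prj_insert {t : X} {T : Finset X} (ht : t ∉ T) (b : X → Y) :
    prj (X := X) (Y := Y) (insert t T) b = pim t (b t) * prj T b := by
  apply LinearMap.ext; intro G; funext f
  simp only [Module.End.mul_apply, prj_apply, pim_apply]
  by_cases h1 : f t = b t <;> by_cases h2 : ∀ x ∈ T, f x = b x
  · have hall : ∀ x ∈ insert t T, f x = b x := by
      intro x hx
      rcases Finset.mem_insert.mp hx with rfl | hx
      · exact h1
      · exact h2 x hx
    rw [if_pos hall, if_pos h1, if_pos h2]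
  · rw [if_neg (fun hh => h2 (fun x hx => hh x (Finset.mem_insert_of_mem hx))),
      if_pos h1, if_neg h2]
  · rw [if_neg (fun hh => h1 (hh t (Finset.mem_insert_self t T))), if_neg h1]
  · rw [if_neg (fun hh => h1 (hh t (Finset.mem_insert_self t T))), if_neg h1]

lemma pim_avg_pim (t : X) (c : Y) :
    pim (X := X) (Y := Y) t c * avg t * pim t c
      = (Fintype.card Y : ℂ)⁻¹ • pim t c := by
  apply LinearMap.ext; intro G; funext f
  simp only [Module.End.mul_apply, pim_apply, avg_apply, LinearMap.smul_apply, Pi.smul_apply,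
    smul_eq_mul]
  by_cases h : f t = c
  · rw [if_pos h, if_pos h]
    have h1 : ∀ y : Y, (if Function.update f t y t = c then G (Function.update f t y) else 0)
        = if y = c then G (Function.update f t y) else 0 := by
      intro y; rw [Function.update_self]
    simp only [h1]
    rw [Finset.sum_ite_eq' Finset.univ c (fun y => G (Function.update f t y))]
    rw [if_pos (Finset.mem_univ c)]
    rw [show Function.update f t c = f from by rw [← h]; exact Function.update_eq_self t f]
  · rw [if_neg h, if_neg h, mul_zero]

lemma pim_oneSubAvg_pim (t : X) (c : Y) :
    pim (X := X) (Y := Y) t c * (1 - avg t) * pim t c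
      = (1 - (Fintype.card Y : ℂ)⁻¹) • pim t c := by
  have h1 : pim (X := X) (Y := Y) t c * (1 - avg t) * pim t c
      = pim t c * pim t c - pim t c * avg t * pim t c := by
    rw [mul_sub, mul_one, sub_mul]
  rw [h1, pim_idem, pim_avg_pim]
  module

/-- The central algebraic identity: `prj T b * RR T * prj T b = (1 - 1/N) ^ |T| • prj T b`. -/
lemma prj_RR_prj (T : Finset X) (b : X → Y) :
    prj (X := X) (Y := Y) T b * RR T * prj T b
      = ((1 - (Fintype.card Y : ℂ)⁻¹) ^ T.card) • prj T b := by
  classical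
  induction T using Finset.induction_on with
  | empty =>
    rw [RR_empty, prj_empty]
    simp
  | @insert t T ht ih =>
    set A := pim (X := X) (Y := Y) t (b t) with hA
    set B := prj (X := X) (Y := Y) T b with hB
    set E1 := (1 : Module.End ℂ (VF X Y)) - avg t with hE1
    set R' := RR (X := X) (Y := Y) T with hR'
    have hAB : Commute A B := pim_prj_commute _ _ _ _
    have hE1B : Commute E1 B := (Commute.one_left _).sub_left (avg_prj_commute ht b)
    have hAR : Commute A R' := commute_RR (fun s hs => by
      have hst : s ≠ t := by rintro rfl; exact ht hs
      exact (Commute.one_right A).sub_right (avg_pim_commute hst (b t)).symm)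
    have hAEA : A * E1 * A = (1 - (Fintype.card Y : ℂ)⁻¹) • A := pim_oneSubAvg_pim t (b t)
    have hBRB : B * R' * B = ((1 - (Fintype.card Y : ℂ)⁻¹) ^ T.card) • B := ih
    rw [RR_insert ht, prj_insert ht b, Finset.card_insert_of_notMem ht]
    rw [← hA, ← hB, ← hE1, ← hR']
    calc A * B * (E1 * R') * (A * B)
        = A * (B * (E1 * (R' * (A * B)))) := by simp only [mul_assoc]
      _ = A * (E1 * (B * (R' * (A * B)))) := by rw [hE1B.symm.left_comm]
      _ = A * (E1 * (B * (A * (R' * B)))) := by rw [hAR.symm.left_comm]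
      _ = A * (E1 * (A * (B * (R' * B)))) := by rw [hAB.symm.left_comm]
      _ = A * (E1 * (A * (B * R' * B))) := by simp only [mul_assoc]
      _ = A * (E1 * (A * (((1 - (Fintype.card Y : ℂ)⁻¹) ^ T.card) • B))) := by rw [hBRB]
      _ = ((1 - (Fintype.card Y : ℂ)⁻¹) ^ T.card) • (A * E1 * A * B) := by
          simp only [mul_smul_comm, mul_assoc]
      _ = ((1 - (Fintype.card Y : ℂ)⁻¹) ^ T.card) • (((1 - (Fintype.card Y : ℂ)⁻¹) • A) * B) := by
          rw [hAEA]
      _ = ((1 - (Fintype.card Y : ℂ)⁻¹) ^ (T.card + 1)) • (A * B) := by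
          rw [smul_mul_assoc, smul_smul, ← pow_succ]

/-! ### Inner product and self-adjointness -/

def ip (G H : VF X Y) : ℂ := ∑ f : X → Y, (starRingEnd ℂ) (G f) * H f

def n2 (G : VF X Y) : ℝ := ∑ f : X → Y, ‖G f‖ ^ 2

lemma n2_nonneg (G : VF X Y) : 0 ≤ n2 G :=
  Finset.sum_nonneg fun f _ => by positivity

lemma ip_self (G : VF X Y) : ip G G = (n2 G : ℝ) := by
  unfold ip n2
  push_cast
  refine Finset.sum_congr rfl fun f _ => ?_
  rw [mul_comm, Complex.mul_conj']

lemma ip_smul_right (c : ℂ) (u v : VF X Y) : ip u (c • v) = c * ip u v := by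
  unfold ip
  rw [Finset.mul_sum]
  refine Finset.sum_congr rfl fun f _ => ?_
  simp only [Pi.smul_apply, smul_eq_mul]
  ring

def IsSA (A : Module.End ℂ (VF X Y)) : Prop := ∀ G H, ip (A G) H = ip G (A H)

lemma isSA_one : IsSA (1 : Module.End ℂ (VF X Y)) := fun G H => rfl

lemma isSA_sub {A B : Module.End ℂ (VF X Y)} (hA : IsSA A) (hB : IsSA B) :
    IsSA (A - B) := by
  intro G H
  have e1 : ∀ (u v w : VF X Y), ip (u - v) w = ip u w - ip v w := by
    intro u v w
    unfold ip
    rw [← Finset.sum_sub_distrib]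
    refine Finset.sum_congr rfl fun f _ => ?_
    simp only [Pi.sub_apply, map_sub]
    ring
  have e2 : ∀ (u v w : VF X Y), ip u (v - w) = ip u v - ip u w := by
    intro u v w
    unfold ip
    rw [← Finset.sum_sub_distrib]
    refine Finset.sum_congr rfl fun f _ => ?_
    simp only [Pi.sub_apply]
    ring
  simp only [LinearMap.sub_apply, e1, e2]
  rw [hA, hB]

/-- The basic change-of-variables: `(f, y) ↦ (update f t y, f t)` is an involution. -/
def swapUpd (t : X) : ((X → Y) × Y) ≃ ((X → Y) × Y) where
  toFun p := (Function.update p.1 t p.2, p.1 t)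
  invFun p := (Function.update p.1 t p.2, p.1 t)
  left_inv p := by
    cases p with
    | mk f y =>
      simp only [Function.update_self, Function.update_idem, Function.update_eq_self]
  right_inv p := by
    cases p with
    | mk f y =>
      simp only [Function.update_self, Function.update_idem, Function.update_eq_self]

lemma sum_update_swap (t : X) (F : (X → Y) → (X → Y) → ℂ) :
    ∑ f : X → Y, ∑ y : Y, F (Function.update f t y) f
      = ∑ f : X → Y, ∑ y : Y, F f (Function.update f t y) := by
  have h := Fintype.sum_equiv (swapUpd t)
    (fun p => F (Function.update p.1 t p.2) p.1)
    (fun p => F p.1 (Function.update p.1 t p.2)) (fun p => ?_)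
  · rw [Fintype.sum_prod_type, Fintype.sum_prod_type] at h
    exact h
  · cases p with
    | mk f y =>
      simp only [swapUpd, Equiv.coe_fn_mk, Function.update_idem, Function.update_eq_self]

lemma isSA_avg (t : X) : IsSA (avg (X := X) (Y := Y) t) := by
  intro G H
  unfold ip
  have lhs : ∑ f : X → Y, (starRingEnd ℂ) (avg t G f) * H f
      = ∑ f : X → Y, ∑ y : Y,
          (Fintype.card Y : ℂ)⁻¹ * ((starRingEnd ℂ) (G (Function.update f t y)) * H f) := by
    refine Finset.sum_congr rfl fun f _ => ?_
    simp only [avg_apply, map_mul, map_inv₀, map_natCast, map_sum]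
    rw [mul_assoc, Finset.sum_mul, Finset.mul_sum]
  have rhs : ∑ f : X → Y, (starRingEnd ℂ) (G f) * avg t H f
      = ∑ f : X → Y, ∑ y : Y,
          (Fintype.card Y : ℂ)⁻¹ * ((starRingEnd ℂ) (G f) * H (Function.update f t y)) := by
    refine Finset.sum_congr rfl fun f _ => ?_
    simp only [avg_apply]
    rw [Finset.mul_sum, Finset.mul_sum]
    refine Finset.sum_congr rfl fun y _ => ?_
    ring
  rw [lhs, rhs]
  exact sum_update_swap t
    (fun a b => (Fintype.card Y : ℂ)⁻¹ * ((starRingEnd ℂ) (G a) * H b))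

lemma isSA_prj (T : Finset X) (b : X → Y) : IsSA (prj (X := X) (Y := Y) T b) := by
  intro G H
  unfold ip
  refine Finset.sum_congr rfl fun f _ => ?_
  simp only [prj_apply]
  by_cases h : ∀ x ∈ T, f x = b x
  · rw [if_pos h, if_pos h]
  · rw [if_neg h, if_neg h]
    simp

lemma isSA_RR (T : Finset X) : IsSA (RR (X := X) (Y := Y) T) := by
  classical
  induction T using Finset.induction_on with
  | empty => rw [RR_empty]; exact isSA_one
  | @insert t T ht ih =>
    rw [RR_insert ht]
    intro G H
    have hsaE : IsSA ((1 : Module.End ℂ (VF X Y)) - avg t) := isSA_sub isSA_one (isSA_avg t)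
    have hc : Commute ((1 : Module.End ℂ (VF X Y)) - avg t) (RR T) :=
      commute_RR (fun s _ => oneSub_avg_commute t s)
    rw [Module.End.mul_apply, hsaE, ih, ← Module.End.mul_apply, ← hc.eq, Module.End.mul_apply]

/-! ### The core bound -/

lemma ip_abs_le (u v : VF X Y) :
    ‖ip u v‖ ≤ Real.sqrt (n2 u) * Real.sqrt (n2 v) := by
  let u' : EuclideanSpace ℂ (X → Y) := WithLp.toLp 2 u
  let v' : EuclideanSpace ℂ (X → Y) := WithLp.toLp 2 v
  have h1 : ip u v = ⟪u', v'⟫_ℂ := by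
    rw [PiLp.inner_apply]
    unfold ip
    refine Finset.sum_congr rfl fun f _ => ?_
    simp [u', v', mul_comm]
  have h2 : ‖u'‖ = Real.sqrt (n2 u) := by
    rw [EuclideanSpace.norm_eq]
    rfl
  have h3 : ‖v'‖ = Real.sqrt (n2 v) := by
    rw [EuclideanSpace.norm_eq]
    rfl
  calc ‖ip u v‖ = ‖⟪u', v'⟫_ℂ‖ := by rw [h1]
    _ ≤ ‖u'‖ * ‖v'‖ := norm_inner_le_norm u' v'
    _ = Real.sqrt (n2 u) * Real.sqrt (n2 v) := by rw [h2, h3]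

theorem core_bound (T : Finset X) (b : X → Y) (G : VF X Y) (hG : RR T G = 0) :
    (∑ f : X → Y, if ∀ x ∈ T, f x = b x then ‖G f‖ ^ 2 else 0)
      ≤ (1 - (1 - (Fintype.card Y : ℝ)⁻¹) ^ T.card) * ∑ f : X → Y, ‖G f‖ ^ 2 := by
  classical
  set γc : ℂ := 1 - (Fintype.card Y : ℂ)⁻¹ with hγcdef
  set γr : ℝ := 1 - (Fintype.card Y : ℝ)⁻¹ with hγrdef
  have hγ : γc = (γr : ℂ) := by
    rw [hγcdef, hγrdef]
    push_cast
    ring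
  set m := T.card with hm
  set P := prj (X := X) (Y := Y) T b with hP
  set S := (1 : Module.End ℂ (VF X Y)) - RR T with hS
  have hSS : S * S = S := by
    rw [hS, sub_mul, one_mul, mul_sub, mul_one, RR_idem]
    abel
  have hPP : P * P = P := prj_idem T b
  have hPSP : P * S * P = (1 - γc ^ m) • P := by
    have h1 : P * S * P = P * P - P * RR T * P := by
      rw [hS, mul_sub, mul_one, sub_mul]
    rw [h1, hPP, hP, prj_RR_prj]
    module
  have hSG : S G = G := by
    rw [hS, LinearMap.sub_apply, Module.End.one_apply, hG, sub_zero]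
  have hsaS : IsSA S := isSA_sub isSA_one (isSA_RR T)
  have hsaP : IsSA P := isSA_prj T b
  set A := S * P * S with hAdef
  have hsaA : IsSA A := by
    intro u v
    have h1 : ∀ w, A w = S (P (S w)) := by
      intro w
      rw [hAdef, Module.End.mul_apply, Module.End.mul_apply]
    rw [h1, h1, hsaS, hsaP, hsaS]
  have hA2 : A * A = (1 - γc ^ m) • A := by
    have h1 : A * A = S * (P * (S * (S * (P * S)))) := by
      rw [hAdef]; simp only [mul_assoc]
    rw [h1, ← mul_assoc S S (P * S), hSS]
    have h2 : P * (S * (P * S)) = (P * S * P) * S := by simp only [mul_assoc]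
    rw [h2, hPSP, smul_mul_assoc, mul_smul_comm, hAdef, ← mul_assoc]
  have key1 : ip G (A G) = ((n2 (P G) : ℝ) : ℂ) := by
    have h1 : A G = S (P G) := by
      rw [hAdef, Module.End.mul_apply, Module.End.mul_apply, hSG]
    have hPPG : P (P G) = P G := by
      conv_lhs => rw [← Module.End.mul_apply, hPP]
    rw [h1, ← hsaS G (P G), hSG, ← hPPG, ← hsaP G (P G), hPPG, ip_self]
  have key2 : ((n2 (A G) : ℝ) : ℂ) = (1 - γc ^ m) * ((n2 (P G) : ℝ) : ℂ) := by
    have h1 : ip (A G) (A G) = ip G (A (A G)) := hsaA G (A G)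
    have h2 : A (A G) = (1 - γc ^ m) • (A G) := by
      rw [← Module.End.mul_apply, hA2]
      simp only [LinearMap.smul_apply]
    rw [← ip_self (A G), h1, h2, ip_smul_right, key1]
  have key2r : n2 (A G) = (1 - γr ^ m) * n2 (P G) := by
    rw [hγ] at key2
    push_cast at key2
    exact_mod_cast key2
  have hCS : n2 (P G) ≤ Real.sqrt (n2 G) * Real.sqrt (n2 (A G)) := by
    have h0 : n2 (P G) = ‖ip G (A G)‖ := by
      rw [key1, Complex.norm_real, Real.norm_eq_abs, abs_of_nonneg (n2_nonneg _)]
    rw [h0]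
    exact ip_abs_le G (A G)
  have hsum : (∑ f : X → Y, if ∀ x ∈ T, f x = b x then ‖G f‖ ^ 2 else 0) = n2 (P G) := by
    unfold n2
    refine Finset.sum_congr rfl fun f _ => ?_
    rw [hP]
    simp only [prj_apply]
    by_cases h : ∀ x ∈ T, f x = b x
    · rw [if_pos h, if_pos h]
    · rw [if_neg h, if_neg h]
      simp
  rw [hsum]
  have ha : 0 ≤ n2 (P G) := n2_nonneg _
  have hs : 0 ≤ n2 G := n2_nonneg _
  have hNpos : (0:ℝ) < (Fintype.card Y : ℝ) := by exact_mod_cast Fintype.card_pos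
  have hγr0 : 0 ≤ γr := by
    rw [hγrdef]
    have : (Fintype.card Y : ℝ)⁻¹ ≤ 1 := by
      rw [inv_le_one_iff₀]
      right
      exact_mod_cast Fintype.card_pos
    linarith
  have hγr1 : γr ≤ 1 := by
    rw [hγrdef]
    have : 0 ≤ (Fintype.card Y : ℝ)⁻¹ := by positivity
    linarith
  have hβ0 : 0 ≤ 1 - γr ^ m := by
    have := pow_le_one₀ hγr0 hγr1 (n := m)
    linarith
  have hsq : n2 (P G) ^ 2 ≤ n2 G * ((1 - γr ^ m) * n2 (P G)) := by
    calc n2 (P G) ^ 2 ≤ (Real.sqrt (n2 G) * Real.sqrt (n2 (A G))) ^ 2 := by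
          exact pow_le_pow_left₀ ha hCS 2
      _ = n2 G * n2 (A G) := by
          rw [mul_pow, Real.sq_sqrt hs, Real.sq_sqrt (n2_nonneg _)]
      _ = n2 G * ((1 - γr ^ m) * n2 (P G)) := by rw [key2r]
  rcases eq_or_lt_of_le ha with h0 | h0
  · rw [← h0]
    exact mul_nonneg hβ0 hs
  · have h1 : n2 (P G) * n2 (P G) ≤ ((1 - γr ^ m) * n2 G) * n2 (P G) := by nlinarith
    exact le_of_mul_le_mul_right h1 h0

/-! ### Functions of junta-degree at most `q` -/

def DepOn (S : Finset X) (G : VF X Y) : Prop :=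
  ∀ f g : X → Y, (∀ x ∈ S, f x = g x) → G f = G g

def DegLE (q : ℕ) : Submodule ℂ (VF X Y) :=
  Submodule.span ℂ {G : VF X Y | ∃ S : Finset X, S.card ≤ q ∧ DepOn S G}

lemma degLE_const (q : ℕ) (c : ℂ) : (fun _ => c) ∈ DegLE (X := X) (Y := Y) q :=
  Submodule.subset_span ⟨∅, Nat.zero_le _, fun _ _ _ => rfl⟩

lemma degLE_pim (x : X) (c : Y) {q : ℕ} {G : VF X Y} (h : G ∈ DegLE q) :
    (fun f => if f x = c then G f else 0) ∈ DegLE (X := X) (Y := Y) (q + 1) := by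
  have hrw : (fun f => if f x = c then G f else 0) = pim x c G := rfl
  rw [hrw]
  clear hrw
  induction h using Submodule.span_induction with
  | mem G hG =>
    obtain ⟨S, hS, hdep⟩ := hG
    refine Submodule.subset_span ⟨insert x S, ?_, ?_⟩
    · exact le_trans (Finset.card_insert_le _ _) (Nat.succ_le_succ hS)
    · intro f g hfg
      simp only [pim_apply]
      have hx : f x = g x := hfg x (Finset.mem_insert_self x S)
      have hG' : G f = G g := hdep f g fun y hy => hfg y (Finset.mem_insert_of_mem hy)
      rw [hx, hG']
  | zero =>
    rw [map_zero]
    exact Submodule.zero_mem _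
  | add u v hu hv ihu ihv =>
    rw [map_add]
    exact Submodule.add_mem _ ihu ihv
  | smul a u hu ihu =>
    rw [map_smul]
    exact Submodule.smul_mem _ _ ihu

lemma degLE_annihilate {q : ℕ} {G : VF X Y} (h : G ∈ DegLE q) {T : Finset X}
    (hT : q < T.card) : RR T G = 0 := by
  induction h using Submodule.span_induction with
  | mem G hG =>
    obtain ⟨S, hS, hdep⟩ := hG
    have hns : ¬ T ⊆ S := fun hsub => by
      have := Finset.card_le_card hsub
      omega
    obtain ⟨t, htT, htS⟩ := Finset.not_subset.mp hns
    have havg : avg t G = G := by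
      funext f
      simp only [avg_apply]
      have hconst : ∀ y : Y, G (Function.update f t y) = G f := fun y =>
        hdep _ _ fun x hx => Function.update_of_ne (by rintro rfl; exact htS hx) _ _
      simp only [hconst, Finset.sum_const, Finset.card_univ, nsmul_eq_mul]
      rw [inv_mul_cancel_left₀ cardY_ne]
    have h2 : RR (X := X) (Y := Y) T = RR (T.erase t) * (1 - avg t) :=
      (Finset.noncommProd_erase_mul T htT (fun t => 1 - avg t)
        (fun _ _ _ _ _ => oneSub_avg_commute _ _)).symm
    have h3 : RR (X := X) (Y := Y) T G = RR (T.erase t) (G - avg t G) := by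
      rw [h2, Module.End.mul_apply, LinearMap.sub_apply, Module.End.one_apply]
    rw [h3, havg, sub_self, map_zero]
  | zero => exact map_zero _
  | add u v hu hv ihu ihv => rw [map_add, ihu, ihv, add_zero]
  | smul a u hu ihu => rw [map_smul, ihu, smul_zero]

end BZAux

section BZGlue

open BZAux

variable {X Y Z : Type*} [Fintype X] [DecidableEq X]
  [Fintype Z] [DecidableEq Z]
  [Fintype Y] [DecidableEq Y] [AddCommGroup Y]

lemma oracleOp_apply (f : X → Y) (v : EuclideanSpace ℂ (X × Y × Z)) (p : X × Y × Z) :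
    oracleOp f v p = v (p.1, p.2.1 - f p.1, p.2.2) := rfl

lemma oracleOp_norm (f : X → Y) (v : EuclideanSpace ℂ (X × Y × Z)) :
    ‖oracleOp f v‖ = ‖v‖ := by
  rw [EuclideanSpace.norm_eq, EuclideanSpace.norm_eq]
  congr 1
  refine Fintype.sum_equiv
    (⟨fun p => (p.1, p.2.1 - f p.1, p.2.2), fun p => (p.1, p.2.1 + f p.1, p.2.2),
      fun p => by simp, fun p => by simp⟩ : (X × Y × Z) ≃ (X × Y × Z))
    (fun p => ‖oracleOp f v p‖ ^ 2) (fun p => ‖v p‖ ^ 2) (fun p => rfl)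

lemma runQ_norm : ∀ (T : ℕ)
    (CC : Fin (T + 1) → (EuclideanSpace ℂ (X × Y × Z) →L[ℂ] EuclideanSpace ℂ (X × Y × Z))),
    (∀ i, CC i ∈ unitary (EuclideanSpace ℂ (X × Y × Z) →L[ℂ] EuclideanSpace ℂ (X × Y × Z))) →
    ∀ (O : EuclideanSpace ℂ (X × Y × Z) →L[ℂ] EuclideanSpace ℂ (X × Y × Z)),
    (∀ v, ‖O v‖ = ‖v‖) → ∀ ψ, ‖runQ T CC O ψ‖ = ‖ψ‖
  | 0, CC, hC, O, hO, ψ => by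
      show ‖CC 0 ψ‖ = ‖ψ‖
      exact (CC 0).norm_map_of_mem_unitary (hC 0) ψ
  | (T + 1), CC, hC, O, hO, ψ => by
      show ‖CC (Fin.last (T + 1)) (O (runQ T (fun i => CC i.castSucc) O ψ))‖ = ‖ψ‖
      rw [(CC (Fin.last (T + 1))).norm_map_of_mem_unitary (hC _), hO,
        runQ_norm T (fun i => CC i.castSucc) (fun i => hC _) O hO ψ]

lemma clm_apply_expand {ι : Type*} [Fintype ι] [DecidableEq ι]
    (A : EuclideanSpace ℂ ι →L[ℂ] EuclideanSpace ℂ ι) (v : EuclideanSpace ℂ ι) (w : ι) :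
    A v w = ∑ w' : ι, v w' * A (EuclideanSpace.single w' 1) w := by
  have hv : ∑ w' : ι, v w' • EuclideanSpace.single w' (1 : ℂ) = v := by
    have h := (EuclideanSpace.basisFun ι ℂ).sum_repr v
    simpa [EuclideanSpace.basisFun_apply, EuclideanSpace.basisFun_repr] using h
  have h1 : ∀ u : EuclideanSpace ℂ ι, u w = ⟪EuclideanSpace.single w (1 : ℂ), u⟫_ℂ := by
    intro u
    rw [EuclideanSpace.inner_single_left]
    simp
  conv_lhs => rw [h1 (A v), ← hv]
  rw [map_sum, inner_sum]
  refine Finset.sum_congr rfl fun w' _ => ?_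
  rw [map_smul, inner_smul_right, ← h1 (A (EuclideanSpace.single w' 1))]

lemma deg_run : ∀ (T : ℕ)
    (CC : Fin (T + 1) → (EuclideanSpace ℂ (X × Y × Z) →L[ℂ] EuclideanSpace ℂ (X × Y × Z)))
    (ψ : EuclideanSpace ℂ (X × Y × Z)) (w : X × Y × Z),
    (fun f : X → Y => runQ T CC (oracleOp f) ψ w) ∈ DegLE (X := X) (Y := Y) T
  | 0, CC, ψ, w =>
      Submodule.subset_span ⟨∅, Nat.zero_le _, fun f g _ => rfl⟩
  | (T + 1), CC, ψ, w => by
    have hcomp : (fun f : X → Y => runQ (T + 1) CC (oracleOp f) ψ w)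
        = fun f : X → Y => ∑ w' : X × Y × Z,
            (∑ c : Y, if f w'.1 = c then
                runQ T (fun i => CC i.castSucc) (oracleOp f) ψ (w'.1, w'.2.1 - c, w'.2.2) else 0)
              * (CC (Fin.last (T + 1)) (EuclideanSpace.single w' 1) w) := by
      funext f
      show CC (Fin.last (T + 1)) (oracleOp f (runQ T (fun i => CC i.castSucc) (oracleOp f) ψ)) w = _
      rw [clm_apply_expand]
      refine Finset.sum_congr rfl fun w' _ => ?_
      congr 1
      rw [oracleOp_apply]
      rw [Finset.sum_ite_eq Finset.univ (f w'.1)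
        (fun c => runQ T (fun i => CC i.castSucc) (oracleOp f) ψ (w'.1, w'.2.1 - c, w'.2.2))]
      rw [if_pos (Finset.mem_univ _)]
    rw [hcomp]
    have hout : (fun f : X → Y => ∑ w' : X × Y × Z,
          (∑ c : Y, if f w'.1 = c then
              runQ T (fun i => CC i.castSucc) (oracleOp f) ψ (w'.1, w'.2.1 - c, w'.2.2) else 0)
            * (CC (Fin.last (T + 1)) (EuclideanSpace.single w' 1) w))
        = ∑ w' : X × Y × Z, (fun f : X → Y =>
          (∑ c : Y, if f w'.1 = c then
              runQ T (fun i => CC i.castSucc) (oracleOp f) ψ (w'.1, w'.2.1 - c, w'.2.2) else 0)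
            * (CC (Fin.last (T + 1)) (EuclideanSpace.single w' 1) w)) := by
      funext f
      rw [Finset.sum_apply]
    rw [hout]
    apply Submodule.sum_mem
    intro w' _
    have hterm : (fun f : X → Y =>
          (∑ c : Y, if f w'.1 = c then
              runQ T (fun i => CC i.castSucc) (oracleOp f) ψ (w'.1, w'.2.1 - c, w'.2.2) else 0)
            * (CC (Fin.last (T + 1)) (EuclideanSpace.single w' 1) w))
        = (CC (Fin.last (T + 1)) (EuclideanSpace.single w' 1) w) •
            (fun f : X → Y => ∑ c : Y, if f w'.1 = c then
              runQ T (fun i => CC i.castSucc) (oracleOp f) ψ (w'.1, w'.2.1 - c, w'.2.2) else 0) := by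
      funext f
      simp only [Pi.smul_apply, smul_eq_mul]
      ring
    rw [hterm]
    apply Submodule.smul_mem
    have hsum : (fun f : X → Y => ∑ c : Y, if f w'.1 = c then
          runQ T (fun i => CC i.castSucc) (oracleOp f) ψ (w'.1, w'.2.1 - c, w'.2.2) else 0)
        = ∑ c : Y, (fun f : X → Y => if f w'.1 = c then
            runQ T (fun i => CC i.castSucc) (oracleOp f) ψ (w'.1, w'.2.1 - c, w'.2.2) else 0) := by
      funext f
      rw [Finset.sum_apply]
    rw [hsum]
    apply Submodule.sum_mem
    intro c _
    exact degLE_pim w'.1 c (deg_run T (fun i => CC i.castSucc) ψ (w'.1, w'.2.1 - c, w'.2.2))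

end BZGlue

/-- A `q`-query algorithm produces `q+1` distinct-input correct input–output pairs of a
uniformly random function `f : X → Y` with probability at most `2^⌈log₂(q+1)⌉ / |Y|`
(Boneh–Zhandry security of a random function). -/
theorem random_function_BZ_secure
    {X Y Z : Type*} [Fintype X] [DecidableEq X] [Nonempty X]
    [Fintype Z] [DecidableEq Z] [Nonempty Z]
    [Fintype Y] [DecidableEq Y] [AddCommGroup Y]
    (hY : 2 ≤ Fintype.card Y)
    (q : ℕ)
    (ψ₀ : EuclideanSpace ℂ (X × Y × Z)) (hψ₀ : ‖ψ₀‖ = 1)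
    (C : Fin (q + 1) →
      (EuclideanSpace ℂ (X × Y × Z) →L[ℂ] EuclideanSpace ℂ (X × Y × Z)))
    (hC : ∀ i, C i ∈
      unitary (EuclideanSpace ℂ (X × Y × Z) →L[ℂ] EuclideanSpace ℂ (X × Y × Z)))
    (out : X × Y × Z → Fin (q + 1) → X × Y) :
    (∑ f : X → Y, ∑ w : X × Y × Z,
        if (Function.Injective fun i => (out w i).1) ∧ (∀ i, f (out w i).1 = (out w i).2)
        then ‖(⟪EuclideanSpace.single w 1, runQ q C (oracleOp f) ψ₀⟫_ℂ)‖ ^ 2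
        else 0)
      / (Fintype.card (X → Y) : ℝ)
      ≤ (2 : ℝ) ^ (Nat.clog 2 (q + 1)) / (Fintype.card Y : ℝ) := by
  classical
  open BZAux in
  have hNpos : (0 : ℝ) < (Fintype.card Y : ℝ) := by exact_mod_cast Fintype.card_pos
  have h1N : (1 : ℝ) ≤ (Fintype.card Y : ℝ) := by
    exact_mod_cast Nat.succ_le_of_lt Fintype.card_pos
  have hinv1 : (Fintype.card Y : ℝ)⁻¹ ≤ 1 := by
    rw [inv_le_one_iff₀]
    right
    exact h1N
  have hinv0 : (0 : ℝ) ≤ (Fintype.card Y : ℝ)⁻¹ := by positivity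
  set β : ℝ := 1 - (1 - (Fintype.card Y : ℝ)⁻¹) ^ (q + 1) with hβdef
  have hβ0 : 0 ≤ β := by
    have h := pow_le_one₀ (by linarith : (0:ℝ) ≤ 1 - (Fintype.card Y : ℝ)⁻¹)
      (by linarith : (1:ℝ) - (Fintype.card Y : ℝ)⁻¹ ≤ 1) (n := q + 1)
    rw [hβdef]
    linarith
  have hβle : β ≤ ((q : ℝ) + 1) / (Fintype.card Y : ℝ) := by
    have hb := one_add_mul_le_pow (a := -(Fintype.card Y : ℝ)⁻¹) (by linarith) (q + 1)
    have he : (1 : ℝ) + -(Fintype.card Y : ℝ)⁻¹ = 1 - (Fintype.card Y : ℝ)⁻¹ := by ring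
    rw [he] at hb
    rw [hβdef, div_eq_mul_inv]
    push_cast at hb
    linarith
  have hcard1 : ∀ f : X → Y, ∑ w : X × Y × Z, ‖runQ q C (oracleOp f) ψ₀ w‖ ^ 2 = 1 := by
    intro f
    have h1 : ‖runQ q C (oracleOp f) ψ₀‖ = 1 := by
      rw [runQ_norm q C hC (oracleOp f) (oracleOp_norm f), hψ₀]
    have h2 := EuclideanSpace.norm_eq (runQ q C (oracleOp f) ψ₀)
    rw [h1] at h2
    exact Real.sqrt_eq_one.mp h2.symm
  have hperw : ∀ w : X × Y × Z,
      (∑ f : X → Y,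
        if (Function.Injective fun i => (out w i).1) ∧ (∀ i, f (out w i).1 = (out w i).2)
        then ‖(⟪EuclideanSpace.single w 1, runQ q C (oracleOp f) ψ₀⟫_ℂ)‖ ^ 2
        else 0)
      ≤ β * ∑ f : X → Y, ‖runQ q C (oracleOp f) ψ₀ w‖ ^ 2 := by
    intro w
    by_cases hinj : Function.Injective fun i => (out w i).1
    · set T : Finset X := Finset.image (fun i => (out w i).1) Finset.univ with hTdef
      have hTcard : T.card = q + 1 := by
        rw [hTdef, Finset.card_image_of_injective _ hinj, Finset.card_univ, Fintype.card_fin]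
      set b : X → Y := fun x =>
          if h : ∃ i : Fin (q + 1), (out w i).1 = x then (out w h.choose).2
          else (out w ⟨0, Nat.succ_pos q⟩).2 with hbdef
      have hbspec : ∀ i : Fin (q + 1), b (out w i).1 = (out w i).2 := by
        intro i
        have hex : ∃ j : Fin (q + 1), (out w j).1 = (out w i).1 := ⟨i, rfl⟩
        have hch : hex.choose = i := hinj hex.choose_spec
        simp only [hbdef]
        rw [dif_pos hex, hch]
      have hcond : ∀ f : X → Y,
          ((∀ i, f (out w i).1 = (out w i).2) ↔ ∀ x ∈ T, f x = b x) := by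
        intro f
        constructor
        · intro hf x hx
          rw [hTdef] at hx
          obtain ⟨i, -, hi⟩ := Finset.mem_image.mp hx
          rw [← hi, hf i, hbspec i]
        · intro hf i
          have hx : (out w i).1 ∈ T := by
            rw [hTdef]
            exact Finset.mem_image_of_mem _ (Finset.mem_univ i)
          rw [hf _ hx, hbspec i]
      have hdeg : (fun f : X → Y => runQ q C (oracleOp f) ψ₀ w)
          ∈ BZAux.DegLE (X := X) (Y := Y) q := deg_run q C ψ₀ w
      have hann : BZAux.RR T (fun f : X → Y => runQ q C (oracleOp f) ψ₀ w) = 0 :=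
        BZAux.degLE_annihilate hdeg (by rw [hTcard]; omega)
      have hc := BZAux.core_bound T b (fun f : X → Y => runQ q C (oracleOp f) ψ₀ w) hann
      rw [hTcard] at hc
      have hrw : (∑ f : X → Y,
          if (Function.Injective fun i => (out w i).1) ∧ (∀ i, f (out w i).1 = (out w i).2)
          then ‖(⟪EuclideanSpace.single w 1, runQ q C (oracleOp f) ψ₀⟫_ℂ)‖ ^ 2
          else 0)
          = ∑ f : X → Y,
            if (∀ x ∈ T, f x = b x) then ‖runQ q C (oracleOp f) ψ₀ w‖ ^ 2 else 0 := by
        refine Finset.sum_congr rfl fun f _ => ?_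
        have hval : ‖(⟪EuclideanSpace.single w 1, runQ q C (oracleOp f) ψ₀⟫_ℂ)‖ ^ 2
            = ‖runQ q C (oracleOp f) ψ₀ w‖ ^ 2 := by
          rw [EuclideanSpace.inner_single_left]
          simp
        rw [hval]
        exact if_congr ((and_iff_right hinj).trans (hcond f)) rfl rfl
      rw [hrw, hβdef]
      exact hc
    · have hz : ∀ f : X → Y,
          (if (Function.Injective fun i => (out w i).1) ∧ (∀ i, f (out w i).1 = (out w i).2)
          then ‖(⟪EuclideanSpace.single w 1, runQ q C (oracleOp f) ψ₀⟫_ℂ)‖ ^ 2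
          else 0) = 0 := fun f => if_neg (fun hh => hinj hh.1)
      simp only [hz, Finset.sum_const_zero]
      exact mul_nonneg hβ0 (Finset.sum_nonneg fun f _ => by positivity)
  have hcardF : (0 : ℝ) < (Fintype.card (X → Y) : ℝ) := by
    have h : 0 < Fintype.card (X → Y) := Fintype.card_pos
    exact_mod_cast h
  rw [div_le_iff₀ hcardF]
  have htot : (∑ f : X → Y, ∑ w : X × Y × Z,
        if (Function.Injective fun i => (out w i).1) ∧ (∀ i, f (out w i).1 = (out w i).2)
        then ‖(⟪EuclideanSpace.single w 1, runQ q C (oracleOp f) ψ₀⟫_ℂ)‖ ^ 2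
        else 0)
      ≤ β * (Fintype.card (X → Y) : ℝ) := by
    rw [Finset.sum_comm]
    calc (∑ w : X × Y × Z, ∑ f : X → Y,
          if (Function.Injective fun i => (out w i).1) ∧ (∀ i, f (out w i).1 = (out w i).2)
          then ‖(⟪EuclideanSpace.single w 1, runQ q C (oracleOp f) ψ₀⟫_ℂ)‖ ^ 2
          else 0)
        ≤ ∑ w : X × Y × Z, β * ∑ f : X → Y, ‖runQ q C (oracleOp f) ψ₀ w‖ ^ 2 :=
          Finset.sum_le_sum fun w _ => hperw w
      _ = β * ∑ f : X → Y, ∑ w : X × Y × Z, ‖runQ q C (oracleOp f) ψ₀ w‖ ^ 2 := by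
          rw [← Finset.mul_sum, Finset.sum_comm]
      _ = β * ∑ f : X → Y, (1 : ℝ) := by
          exact congrArg _ (Finset.sum_congr rfl fun f _ => hcard1 f)
      _ = β * (Fintype.card (X → Y) : ℝ) := by
          rw [Finset.sum_const, Finset.card_univ, nsmul_eq_mul, mul_one]
  refine le_trans htot (mul_le_mul_of_nonneg_right ?_ (le_of_lt hcardF))
  refine le_trans hβle ?_
  have h2k : ((q : ℝ) + 1) ≤ (2 : ℝ) ^ Nat.clog 2 (q + 1) := by
    have h := Nat.le_pow_clog (by norm_num : 1 < 2) (q + 1)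
    exact_mod_cast h
  gcongr

end
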